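/- Let X be a metric space with locally finite Hausdorff 2-measure satisfying the upper mass bound ℋ²(B(x,r)) ≤ C_U r² for all x ∈ X and r > 0. Then for every x ∈ X and radii 0 < 10r < R with X \ B(x,R) nonempty, the conformal 2-modulus of the family of paths joining the closed ball B̄(x,r) to X \ B(x,R) inside B̄(x,R) is at most 8·C_U / log₂(R/r). -/

import Mathlib

open MeasureTheory Metric Set Filter
open scoped ENNReal NNReal Topology

/-- A continuous curve parametrized by `[0,1]`. -/
structure Curve (X : Type*) [MetricSpace X] where
  toFun : ℝ → X
  contOn : ContinuousOn toFun (Set.Icc 0 1)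

/-- `(L, g, φ)` is a `1`-Lipschitz (arc-length type) parametrization of the curve `γ`. -/
def IsUnitSpeedParam {X : Type*} [MetricSpace X] (γ : Curve X) (L : ℝ) (g : ℝ → X)
    (φ : ℝ → ℝ) : Prop :=
  0 ≤ L ∧ LipschitzOnWith 1 g (Set.Icc 0 L) ∧ MonotoneOn φ (Set.Icc 0 1) ∧
    Set.MapsTo φ (Set.Icc 0 1) (Set.Icc 0 L) ∧ Set.SurjOn φ (Set.Icc 0 1) (Set.Icc 0 L) ∧
    Set.EqOn γ.toFun (g ∘ φ) (Set.Icc 0 1)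

/-- The line integral `∫_γ ρ ds` of a nonnegative function along a curve, defined via
`1`-Lipschitz parametrizations; it equals `∞` when `γ` is not rectifiable. -/
noncomputable def curveIntegralENN {X : Type*} [MetricSpace X] (ρ : X → ℝ≥0∞) (γ : Curve X) :
    ℝ≥0∞ :=
  ⨅ (L : ℝ) (g : ℝ → X) (φ : ℝ → ℝ) (_ : IsUnitSpeedParam γ L g φ),
    ∫⁻ t in Set.Icc 0 L, ρ (g t)

/-- Admissibility of a Borel function `ρ` for the curve family `Γ`. -/
def Admissible {X : Type*} [MetricSpace X] [MeasurableSpace X] (ρ : X → ℝ≥0∞)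
    (Γ : Set (Curve X)) : Prop :=
  Measurable ρ ∧ ∀ γ ∈ Γ, 1 ≤ curveIntegralENN ρ γ

/-- The conformal (2-)modulus of a curve family with respect to the measure `μ`. -/
noncomputable def modulus {X : Type*} [MetricSpace X] [MeasurableSpace X] (μ : Measure X)
    (Γ : Set (Curve X)) : ℝ≥0∞ :=
  ⨅ (ρ : X → ℝ≥0∞) (_ : Admissible ρ Γ), ∫⁻ x, ρ x ^ 2 ∂μ

/-- The family of curves joining `E` and `F` within `G`. -/
def JoiningCurves {X : Type*} [MetricSpace X] (E F G : Set X) : Set (Curve X) :=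
  {γ | (∀ t ∈ Set.Icc (0:ℝ) 1, γ.toFun t ∈ G) ∧
    (∃ t ∈ Set.Icc (0:ℝ) 1, γ.toFun t ∈ E) ∧ ∃ t ∈ Set.Icc (0:ℝ) 1, γ.toFun t ∈ F}

/-- The image of a curve family under a map. -/
def mapCurves {X Y : Type*} [MetricSpace X] [MetricSpace Y] (F : X → Y)
    (Γ : Set (Curve X)) : Set (Curve Y) :=
  {η | ∃ γ ∈ Γ, Set.EqOn η.toFun (F ∘ γ.toFun) (Set.Icc 0 1)}

/-- Hausdorff 2-measure with the paper's normalization constant `a₂ = π/4`. -/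
noncomputable def paperH2 (X : Type*) [MetricSpace X] [MeasurableSpace X] [BorelSpace X] :
    Measure X := (ENNReal.ofReal (Real.pi / 4)) • μH[2]

lemma key_vol {f : ℝ → ℝ} (hf : LipschitzWith 1 f) {s₀ s₁ a b : ℝ}
    (h₀ : f s₀ ≤ a) (h₁ : b ≤ f s₁) :
    ENNReal.ofReal (b - a) ≤ volume (Set.uIcc s₀ s₁ ∩ f ⁻¹' Set.Ico a b) := by
  set S := Set.uIcc s₀ s₁ ∩ f ⁻¹' Set.Ico a b with hS
  have hsub : Set.Ico a b ⊆ f '' S := by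
    intro c hc
    have hc' : c ∈ Set.uIcc (f s₀) (f s₁) := by
      rw [Set.mem_uIcc]
      exact Or.inl ⟨le_trans h₀ hc.1, le_trans hc.2.le h₁⟩
    obtain ⟨t, ht, hft⟩ := intermediate_value_uIcc hf.continuous.continuousOn hc'
    exact ⟨t, ⟨ht, by rw [Set.mem_preimage, hft]; exact hc⟩, hft⟩
  calc ENNReal.ofReal (b - a) = volume (Set.Ico a b) := (Real.volume_Ico).symm
    _ ≤ volume (f '' S) := measure_mono hsub
    _ = μH[1] (f '' S) := by rw [MeasureTheory.hausdorffMeasure_real]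
    _ ≤ (1:ℝ≥0∞) ^ (1:ℝ) * μH[1] S := by
        simpa using hf.hausdorffMeasure_image_le zero_le_one S
    _ = volume S := by rw [MeasureTheory.hausdorffMeasure_real]; simp

/-- Under the upper mass bound `ℋ²(B(x,r)) ≤ C_U r²`, the modulus of the family of curves
joining `B̄(x,r)` to `X ∖ B(x,R)` inside `B̄(x,R)` is at most `8 C_U / log₂(R/r)`. -/
theorem stmt4 {X : Type*} [MetricSpace X] [MeasurableSpace X] [BorelSpace X]
    (C_U : ℝ) (hC : 0 < C_U)
    (hmass : ∀ (x : X) (r : ℝ), 0 < r → paperH2 X (ball x r) ≤ ENNReal.ofReal (C_U * r ^ 2))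
    (x : X) (r R : ℝ) (hr : 0 < r) (hR : 10 * r < R)
    (hne : ((ball x R)ᶜ : Set X).Nonempty) :
    modulus (paperH2 X) (JoiningCurves (closedBall x r) ((ball x R)ᶜ) (closedBall x R)) ≤
      ENNReal.ofReal (8 * C_U / Real.logb 2 (R / r)) := by
  have hR0 : 0 < R := by linarith
  set Lg : ℝ := Real.logb 2 (R / r) with hLg
  have hRr0 : 0 < R / r := by positivity
  have hRr : (10:ℝ) < R / r := (lt_div_iff₀ hr).2 (by linarith)
  have h3L : (3:ℝ) < Lg := by
    rw [hLg, Real.lt_logb_iff_rpow_lt one_lt_two hRr0]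
    have h8 : (2:ℝ) ^ (3:ℝ) = 8 := by
      rw [show (3:ℝ) = ((3:ℕ):ℝ) by norm_num, Real.rpow_natCast]; norm_num
    linarith
  set N : ℕ := ⌊Lg⌋₊ with hN
  have hN3 : 3 ≤ N := Nat.le_floor (by exact_mod_cast h3L.le)
  have hN0 : 0 < N := by omega
  have hN0' : (0:ℝ) < N := by exact_mod_cast hN0
  have hLN : Lg < N + 1 := Nat.lt_floor_add_one Lg
  have hNL : (N:ℝ) ≤ Lg := Nat.floor_le (by linarith)
  have h2N : (2:ℝ) ^ N * r ≤ R := by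
    have h1 : (2:ℝ) ^ N ≤ R / r := by
      calc (2:ℝ) ^ N = (2:ℝ) ^ ((N:ℝ)) := (Real.rpow_natCast 2 N).symm
        _ ≤ (2:ℝ) ^ Lg := (Real.rpow_le_rpow_left_iff one_lt_two).2 hNL
        _ = R / r := Real.rpow_logb (by norm_num) (by norm_num) hRr0
    calc (2:ℝ) ^ N * r ≤ (R / r) * r := by nlinarith
      _ = R := by field_simp
  set A : ℕ → Set X := fun k => ball x (2 ^ (k+1) * r) \ ball x (2 ^ k * r) with hA
  set ρ : X → ℝ≥0∞ := fun y => (N:ℝ≥0∞)⁻¹ *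
      ∑ k ∈ Finset.range N, (A k).indicator (fun _ => ENNReal.ofReal (((2:ℝ) ^ k * r)⁻¹)) y with hρ
  have hAm : ∀ k, MeasurableSet (A k) := fun k => measurableSet_ball.diff measurableSet_ball
  have hAdisj : ∀ j k, j < k → ∀ y, y ∈ A j → y ∉ A k := by
    intro j k hjk y hyj hyk
    have h1 : dist y x < 2 ^ (j+1) * r := mem_ball.1 hyj.1
    have h2 : ¬ dist y x < 2 ^ k * r := fun h => hyk.2 (mem_ball.2 h)
    have h3 : (2:ℝ) ^ (j+1) ≤ 2 ^ k := pow_le_pow_right₀ one_le_two hjk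
    push_neg at h2
    nlinarith
  have hρm : Measurable ρ :=
    (Finset.measurable_sum _ fun k _ => measurable_const.indicator (hAm k)).const_mul _
  have hadm : Admissible ρ (JoiningCurves (closedBall x r) ((ball x R)ᶜ) (closedBall x R)) := by
    refine ⟨hρm, ?_⟩
    rintro γ ⟨hGmem, ⟨ta, hta, hmema⟩, tb, htb, hmemb⟩
    refine le_iInf fun Lp => le_iInf fun g => le_iInf fun φ => le_iInf fun hp => ?_
    obtain ⟨hLp0, hg, hφm, hφmaps, hφsurj, heq⟩ := hp
    set G : ℝ → X := fun t => (Set.Icc 0 Lp).restrict g (Set.projIcc 0 Lp hLp0 t) with hG'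
    have hGlip : LipschitzWith 1 G := by
      have := (LipschitzOnWith.to_restrict hg).comp (LipschitzWith.projIcc hLp0); rw [mul_one] at this; exact this
    have hGeq : ∀ t ∈ Set.Icc 0 Lp, G t = g t := fun t ht => by
      simp [hG', Set.projIcc_of_mem hLp0 ht]; rfl
    set f : ℝ → ℝ := fun t => dist x (G t) with hf'
    have hflip : LipschitzWith 1 f := by
      have := (LipschitzWith.dist_right x).comp hGlip; rw [mul_one] at this; exact this
    set s₀ : ℝ := φ ta with hs₀'
    set s₁ : ℝ := φ tb with hs₁'
    have hs₀ : s₀ ∈ Set.Icc 0 Lp := hφmaps hta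
    have hs₁ : s₁ ∈ Set.Icc 0 Lp := hφmaps htb
    have hfs₀ : f s₀ ≤ r := by
      rw [hf']; simp only [hGeq s₀ hs₀]
      rw [dist_comm, hs₀', ← Function.comp_apply (f := g) (g := φ), ← heq hta]
      exact mem_closedBall.1 hmema
    have hfs₁ : R ≤ f s₁ := by
      rw [hf']; simp only [hGeq s₁ hs₁]
      rw [dist_comm, hs₁', ← Function.comp_apply (f := g) (g := φ), ← heq htb]
      exact not_lt.1 fun h => hmemb (mem_ball.2 h)
    set T : ℕ → Set ℝ := fun k => Set.uIcc s₀ s₁ ∩ f ⁻¹' Set.Ico (2 ^ k * r) (2 ^ (k+1) * r)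
      with hT
    have hTm : ∀ k, MeasurableSet (T k) :=
      fun k => measurableSet_uIcc.inter (hflip.continuous.measurable measurableSet_Ico)
    have hTsub : ∀ k, T k ⊆ Set.Icc 0 Lp := fun k =>
      Set.Subset.trans Set.inter_subset_left (Set.ordConnected_Icc.uIcc_subset hs₀ hs₁)
    have hTvol : ∀ k < N, ENNReal.ofReal (2 ^ k * r) ≤ volume (T k) := by
      intro k hk
      have h1 : f s₀ ≤ 2 ^ k * r :=
        le_trans hfs₀ (le_mul_of_one_le_left hr.le (one_le_pow₀ one_le_two))
      have h2 : (2:ℝ) ^ (k+1) * r ≤ f s₁ := by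
        refine le_trans (le_trans ?_ h2N) hfs₁
        have : (2:ℝ) ^ (k+1) ≤ 2 ^ N := pow_le_pow_right₀ one_le_two hk
        nlinarith
      have := key_vol hflip h1 h2
      convert this using 2
      ring
    have hTdisj : (↑(Finset.range N) : Set ℕ).PairwiseDisjoint T := by
      intro j _ k _ hjk
      refine Set.disjoint_left.2 fun t htj htk => ?_
      rcases lt_or_gt_of_ne hjk with h | h
      · have h1 : f t < 2 ^ (j+1) * r := htj.2.2
        have h2 : (2:ℝ) ^ k * r ≤ f t := htk.2.1
        have : (2:ℝ) ^ (j+1) ≤ 2 ^ k := pow_le_pow_right₀ one_le_two h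
        nlinarith
      · have h1 : f t < 2 ^ (k+1) * r := htk.2.2
        have h2 : (2:ℝ) ^ j * r ≤ f t := htj.2.1
        have : (2:ℝ) ^ (k+1) ≤ 2 ^ j := pow_le_pow_right₀ one_le_two h
        nlinarith
    have hmeas_le : (∑ k ∈ Finset.range N, (volume : Measure ℝ).restrict (T k)) ≤
        (volume : Measure ℝ).restrict (Set.Icc 0 Lp) := by
      refine Measure.le_iff.2 fun s hs => ?_
      rw [Measure.finset_sum_apply]
      calc ∑ k ∈ Finset.range N, (volume : Measure ℝ).restrict (T k) s
          = ∑ k ∈ Finset.range N, volume (s ∩ T k) := by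
            refine Finset.sum_congr rfl fun k _ => ?_
            rw [Measure.restrict_apply hs]
        _ = volume (⋃ k ∈ Finset.range N, s ∩ T k) :=
            (measure_biUnion_finset (hTdisj.mono fun k => Set.inter_subset_right)
              (fun k _ => hs.inter (hTm k))).symm
        _ ≤ (volume : Measure ℝ).restrict (Set.Icc 0 Lp) s := by
            rw [Measure.restrict_apply hs]
            refine measure_mono ?_
            simp only [Set.iUnion_subset_iff]
            exact fun k hk => Set.inter_subset_inter_right s (hTsub k)
    have hpt : ∀ k < N, ∀ t ∈ T k,
        (N:ℝ≥0∞)⁻¹ * ENNReal.ofReal (((2:ℝ) ^ k * r)⁻¹) ≤ ρ (g t) := by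
      intro k hk t ht
      have htI : t ∈ Set.Icc 0 Lp := hTsub k ht
      have hft : f t ∈ Set.Ico ((2:ℝ) ^ k * r) (2 ^ (k+1) * r) := ht.2
      have hfeq : f t = dist (g t) x := by rw [hf']; simp only [hGeq t htI]; rw [dist_comm]
      rw [hfeq] at hft
      have hgt : g t ∈ A k :=
        ⟨mem_ball.2 hft.2, fun hmem => absurd (mem_ball.1 hmem) (not_lt.2 hft.1)⟩
      rw [hρ]
      refine mul_le_mul_right ?_ _
      calc ENNReal.ofReal (((2:ℝ) ^ k * r)⁻¹)
          = (A k).indicator (fun _ => ENNReal.ofReal (((2:ℝ) ^ k * r)⁻¹)) (g t) :=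
            (Set.indicator_of_mem hgt (fun _ => ENNReal.ofReal (((2:ℝ) ^ k * r)⁻¹))).symm
        _ ≤ ∑ j ∈ Finset.range N,
              (A j).indicator (fun _ => ENNReal.ofReal (((2:ℝ) ^ j * r)⁻¹)) (g t) :=
            Finset.single_le_sum
              (f := fun j => (A j).indicator (fun _ => ENNReal.ofReal (((2:ℝ) ^ j * r)⁻¹)) (g t))
              (fun i _ => zero_le) (Finset.mem_range.2 hk)
    calc (1:ℝ≥0∞) = ∑ _k ∈ Finset.range N, (N:ℝ≥0∞)⁻¹ := by
          rw [Finset.sum_const, Finset.card_range, nsmul_eq_mul,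
            ENNReal.mul_inv_cancel (by exact_mod_cast hN0.ne') (ENNReal.natCast_ne_top N)]
      _ ≤ ∑ k ∈ Finset.range N, ∫⁻ t in T k, ρ (g t) := by
          refine Finset.sum_le_sum fun k hk => ?_
          have hk' := Finset.mem_range.1 hk
          calc (N:ℝ≥0∞)⁻¹
              = (N:ℝ≥0∞)⁻¹ * (ENNReal.ofReal (((2:ℝ) ^ k * r)⁻¹) *
                  ENNReal.ofReal ((2:ℝ) ^ k * r)) := by
                rw [← ENNReal.ofReal_mul (by positivity),
                  inv_mul_cancel₀ (by positivity : ((2:ℝ) ^ k * r) ≠ 0)]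
                simp
            _ = ((N:ℝ≥0∞)⁻¹ * ENNReal.ofReal (((2:ℝ) ^ k * r)⁻¹)) *
                  ENNReal.ofReal ((2:ℝ) ^ k * r) := by ring
            _ ≤ ((N:ℝ≥0∞)⁻¹ * ENNReal.ofReal (((2:ℝ) ^ k * r)⁻¹)) * volume (T k) :=
                mul_le_mul_right (hTvol k hk') _
            _ = ∫⁻ _t in T k, ((N:ℝ≥0∞)⁻¹ * ENNReal.ofReal (((2:ℝ) ^ k * r)⁻¹)) ∂volume :=
                (setLIntegral_const _ _).symm
            _ ≤ ∫⁻ t in T k, ρ (g t) := setLIntegral_mono' (hTm k) (hpt k hk')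
      _ = ∫⁻ t, ρ (g t) ∂(∑ k ∈ Finset.range N, (volume : Measure ℝ).restrict (T k)) :=
          (lintegral_finset_sum_measure _ _ _).symm
      _ ≤ ∫⁻ t in Set.Icc 0 Lp, ρ (g t) := lintegral_mono' hmeas_le le_rfl
  refine le_trans (iInf₂_le ρ hadm) ?_
  -- energy estimate
  have hsumsq : ∀ y,
      (∑ k ∈ Finset.range N, (A k).indicator (fun _ => ENNReal.ofReal (((2:ℝ) ^ k * r)⁻¹)) y) ^ 2
      = ∑ k ∈ Finset.range N,
          (A k).indicator (fun _ => ENNReal.ofReal (((2:ℝ) ^ k * r)⁻¹) ^ 2) y := by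
    intro y
    by_cases h : ∃ j ∈ Finset.range N, y ∈ A j
    · obtain ⟨j, hj, hyj⟩ := h
      have hvan : ∀ k, k ≠ j → y ∉ A k := by
        intro k hkj hyk
        rcases hkj.lt_or_gt with h' | h'
        · exact hAdisj k j h' y hyk hyj
        · exact hAdisj j k h' y hyj hyk
      rw [Finset.sum_eq_single_of_mem j hj
          (fun k _ hkj => Set.indicator_of_notMem (hvan k hkj) _),
        Finset.sum_eq_single_of_mem j hj
          (fun k _ hkj => Set.indicator_of_notMem (hvan k hkj) _),
        Set.indicator_of_mem hyj, Set.indicator_of_mem hyj]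
    · push_neg at h
      rw [Finset.sum_eq_zero (fun k hk => Set.indicator_of_notMem (h k hk) _),
        Finset.sum_eq_zero (fun k hk => Set.indicator_of_notMem (h k hk) _)]
      simp
  have henergy : ∫⁻ y, ρ y ^ 2 ∂(paperH2 X) ≤ (N:ℝ≥0∞)⁻¹ * ENNReal.ofReal (4 * C_U) := by
    have hcalc : ∫⁻ y, ρ y ^ 2 ∂(paperH2 X)
        = ((N:ℝ≥0∞)⁻¹) ^ 2 * ∑ k ∈ Finset.range N,
            ENNReal.ofReal (((2:ℝ) ^ k * r)⁻¹) ^ 2 * paperH2 X (A k) := by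
      simp only [hρ, mul_pow, hsumsq]
      rw [lintegral_const_mul _ (Finset.measurable_sum _ fun k _ =>
        measurable_const.indicator (hAm k))]
      congr 1
      rw [lintegral_finset_sum _ fun k _ => measurable_const.indicator (hAm k)]
      refine Finset.sum_congr rfl fun k _ => ?_
      rw [lintegral_indicator (hAm k), setLIntegral_const]
    rw [hcalc]
    have hterm : ∀ k ∈ Finset.range N,
        ENNReal.ofReal (((2:ℝ) ^ k * r)⁻¹) ^ 2 * paperH2 X (A k)
          ≤ ENNReal.ofReal (4 * C_U) := by
      intro k _
      have hpos : (0:ℝ) < 2 ^ (k+1) * r := by positivity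
      have hball : paperH2 X (A k) ≤ ENNReal.ofReal (C_U * (2 ^ (k+1) * r) ^ 2) :=
        le_trans (measure_mono Set.diff_subset) (hmass x _ hpos)
      calc ENNReal.ofReal (((2:ℝ) ^ k * r)⁻¹) ^ 2 * paperH2 X (A k)
          ≤ ENNReal.ofReal (((2:ℝ) ^ k * r)⁻¹) ^ 2 *
              ENNReal.ofReal (C_U * (2 ^ (k+1) * r) ^ 2) := mul_le_mul_right hball _
        _ = ENNReal.ofReal ((((2:ℝ) ^ k * r)⁻¹) ^ 2 * (C_U * (2 ^ (k+1) * r) ^ 2)) := by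
            rw [← ENNReal.ofReal_pow (by positivity), ← ENNReal.ofReal_mul (by positivity)]
        _ = ENNReal.ofReal (4 * C_U) := by
            congr 1
            have hne : ((2:ℝ) ^ k * r) ≠ 0 := by positivity
            field_simp
            ring
    calc ((N:ℝ≥0∞)⁻¹) ^ 2 * ∑ k ∈ Finset.range N,
            ENNReal.ofReal (((2:ℝ) ^ k * r)⁻¹) ^ 2 * paperH2 X (A k)
        ≤ ((N:ℝ≥0∞)⁻¹) ^ 2 * ∑ _k ∈ Finset.range N, ENNReal.ofReal (4 * C_U) :=
          mul_le_mul_right (Finset.sum_le_sum hterm) _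
      _ = ((N:ℝ≥0∞)⁻¹) ^ 2 * ((N:ℝ≥0∞) * ENNReal.ofReal (4 * C_U)) := by
          rw [Finset.sum_const, Finset.card_range, nsmul_eq_mul]
      _ = ((N:ℝ≥0∞)⁻¹ * (N:ℝ≥0∞)) * ((N:ℝ≥0∞)⁻¹ * ENNReal.ofReal (4 * C_U)) := by ring
      _ = (N:ℝ≥0∞)⁻¹ * ENNReal.ofReal (4 * C_U) := by
          rw [ENNReal.inv_mul_cancel (by exact_mod_cast hN0.ne') (ENNReal.natCast_ne_top N),
            one_mul]
  refine le_trans henergy ?_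
  have heq : (N:ℝ≥0∞)⁻¹ * ENNReal.ofReal (4 * C_U) = ENNReal.ofReal (4 * C_U / N) := by
    rw [ENNReal.ofReal_div_of_pos hN0', ENNReal.ofReal_natCast, div_eq_mul_inv, mul_comm]
  rw [heq]
  refine ENNReal.ofReal_le_ofReal ?_
  rw [div_le_div_iff₀ hN0' (by linarith : (0:ℝ) < Lg)]
  nlinarith
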